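/- Let a DNA sequence s of length G over {A,C,G,T} contain two interleaved pairs of repeats: there are positions giving identical substrings at two pairs of locations arranged in interleaved order, so that swapping the intervening segments x and y produces a distinct sequence s' with the same multiset of length-L substrings (with multiplicity) as s. Then for reads drawn uniformly at random from the sequence, P(r_1,...,r_N | s) = P(r_1,...,r_N | s') for every read sequence, and the MAP estimator has error probability at least 1/2 conditioned on this event, regardless of N. -/
import Mathlib


open Finset

/-- The length-`L` read of the circular sequence `s` starting at position `t`. -/
def readAt {G : ℕ} (L : ℕ) (hG : 0 < G) (s : Fin G → Fin 4) (t : Fin G) :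
    Fin L → Fin 4 :=
  fun i => s ⟨((t : ℕ) + (i : ℕ)) % G, Nat.mod_lt _ hG⟩

/-- Number of occurrences of the length-`L` string `r` in the circular sequence `s`. -/
def occCount {G : ℕ} (L : ℕ) (hG : 0 < G) (s : Fin G → Fin 4)
    (r : Fin L → Fin 4) : ℕ :=
  (Finset.univ.filter fun t : Fin G => readAt L hG s t = r).card

lemma fiber_card {G L N : ℕ} (hG : 0 < G) (s : Fin G → Fin 4)
    (rs : Fin N → Fin L → Fin 4) :
    (Finset.univ.filter fun t : Fin N → Fin G =>
        (fun n => readAt L hG s (t n)) = rs).card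
      = ∏ n, occCount L hG s (rs n) := by
  have : (Finset.univ.filter fun t : Fin N → Fin G =>
        (fun n => readAt L hG s (t n)) = rs)
      = Fintype.piFinset (fun n => Finset.univ.filter fun u => readAt L hG s u = rs n) := by
    ext t
    simp [Fintype.mem_piFinset, funext_iff]
  rw [this, Fintype.card_piFinset]
  rfl

lemma sum_fiber {G L N : ℕ} (hG : 0 < G) (s : Fin G → Fin 4)
    (F : (Fin N → Fin L → Fin 4) → ℝ) :
    ∑ t : Fin N → Fin G, F (fun n => readAt L hG s (t n))
      = ∑ rs : Fin N → Fin L → Fin 4, (∏ n, (occCount L hG s (rs n) : ℝ)) * F rs := by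
  rw [← Finset.sum_fiberwise_of_maps_to
      (g := fun t : Fin N → Fin G => fun n => readAt L hG s (t n))
      (fun t _ => Finset.mem_univ _) (fun t => F (fun n => readAt L hG s (t n)))]
  refine Finset.sum_congr rfl fun rs _ => ?_
  have : ∀ t ∈ Finset.univ.filter (fun t : Fin N → Fin G =>
      (fun n => readAt L hG s (t n)) = rs),
      F (fun n => readAt L hG s (t n)) = F rs := by
    intro t ht
    simp only [Finset.mem_filter] at ht
    rw [ht.2]
  rw [Finset.sum_congr rfl this, Finset.sum_const, nsmul_eq_mul, fiber_card hG]
  push_cast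
  ring

/-- If two distinct circular sequences `s, s'` have the same number of
occurrences of every length-`L` substring, then the likelihood of every tuple of reads
is the same under `s` and `s'`, and any (MAP or other) estimator has error probability
at least `1/2` under the uniform prior on `{s, s'}`, regardless of the number of reads `N`. -/
theorem interleaved_repeats_map_error (G L N : ℕ) (hG : 0 < G)
    (s s' : Fin G → Fin 4) (hne : s ≠ s')
    (hocc : ∀ r : Fin L → Fin 4, occCount L hG s r = occCount L hG s' r) :
    (∀ rs : Fin N → Fin L → Fin 4,
      (∏ n, (occCount L hG s (rs n) : ℝ) / G)
        = ∏ n, (occCount L hG s' (rs n) : ℝ) / G) ∧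
    (∀ φ : (Fin N → Fin L → Fin 4) → (Fin G → Fin 4),
      (1 / 2 : ℝ) ≤
        (1 / 2) * (∑ t : Fin N → Fin G, (1 / (G : ℝ)) ^ N *
            (if φ (fun n => readAt L hG s (t n)) ≠ s then 1 else 0)) +
        (1 / 2) * (∑ t : Fin N → Fin G, (1 / (G : ℝ)) ^ N *
            (if φ (fun n => readAt L hG s' (t n)) ≠ s' then 1 else 0))) := by
  constructor
  · intro rs
    refine Finset.prod_congr rfl fun n _ => ?_
    rw [hocc]
  · intro φ
    have h1 : ∑ t : Fin N → Fin G, (1 / (G : ℝ)) ^ N *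
          (if φ (fun n => readAt L hG s (t n)) ≠ s then 1 else 0)
        = ∑ rs : Fin N → Fin L → Fin 4, (∏ n, (occCount L hG s (rs n) : ℝ)) *
            ((1 / (G : ℝ)) ^ N * (if φ rs ≠ s then 1 else 0)) :=
      sum_fiber hG s (fun rs => (1 / (G : ℝ)) ^ N * (if φ rs ≠ s then 1 else 0))
    have h2 : ∑ t : Fin N → Fin G, (1 / (G : ℝ)) ^ N *
          (if φ (fun n => readAt L hG s' (t n)) ≠ s' then 1 else 0)
        = ∑ rs : Fin N → Fin L → Fin 4, (∏ n, (occCount L hG s (rs n) : ℝ)) *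
            ((1 / (G : ℝ)) ^ N * (if φ rs ≠ s' then 1 else 0)) := by
      rw [sum_fiber hG s' (fun rs => (1 / (G : ℝ)) ^ N * (if φ rs ≠ s' then 1 else 0))]
      refine Finset.sum_congr rfl fun rs _ => ?_
      congr 1
      exact Finset.prod_congr rfl fun n _ => by rw [hocc]
    have htotal : ∑ rs : Fin N → Fin L → Fin 4,
        (∏ n, (occCount L hG s (rs n) : ℝ)) * ((1 / (G : ℝ)) ^ N * 1) = 1 := by
      rw [← sum_fiber hG s (fun _ => (1 / (G : ℝ)) ^ N * 1)]
      rw [Finset.sum_const, nsmul_eq_mul]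
      have hGne : (G : ℝ) ≠ 0 := Nat.cast_ne_zero.mpr hG.ne'
      simp [Fintype.card_pi, div_pow, mul_comm]
      field_simp
    rw [h1, h2, ← mul_add, ← Finset.sum_add_distrib]
    have hbound : ∀ rs : Fin N → Fin L → Fin 4,
        (∏ n, (occCount L hG s (rs n) : ℝ)) * ((1 / (G : ℝ)) ^ N * 1)
        ≤ (∏ n, (occCount L hG s (rs n) : ℝ)) * ((1 / (G : ℝ)) ^ N * (if φ rs ≠ s then 1 else 0))
          + (∏ n, (occCount L hG s (rs n) : ℝ)) * ((1 / (G : ℝ)) ^ N * (if φ rs ≠ s' then 1 else 0)) := by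
      intro rs
      rw [← mul_add, ← mul_add]
      have hp : (0:ℝ) ≤ ∏ n, (occCount L hG s (rs n) : ℝ) :=
        Finset.prod_nonneg fun n _ => Nat.cast_nonneg _
      have hq : (0:ℝ) ≤ (1 / (G : ℝ)) ^ N := by positivity
      refine mul_le_mul_of_nonneg_left (mul_le_mul_of_nonneg_left ?_ hq) hp
      by_cases h : φ rs = s
      · have : φ rs ≠ s' := h ▸ hne
        simp [h, this, hne]
      · simp only [ne_eq, h, not_false_eq_true, if_true]
        split <;> norm_num
    calc (1/2 : ℝ) = (1/2) * ∑ rs : Fin N → Fin L → Fin 4,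
            (∏ n, (occCount L hG s (rs n) : ℝ)) * ((1 / (G : ℝ)) ^ N * 1) := by
          rw [htotal]; ring
      _ ≤ _ := by
          refine mul_le_mul_of_nonneg_left (Finset.sum_le_sum fun rs _ => hbound rs) (by norm_num)
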